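/- Let $k$ be a field, $A$ a $k$-algebra, and $\{I_i \mid i \in \Lambda\}$ a family of ideals of $A$ with $I = \bigcap_{i \in \Lambda} I_i$. If $x \in A \otimes_k A$ satisfies $x \in A \otimes_k I_i + I \otimes_k A$ for every $i \in \Lambda$, then $x \in A \otimes_k I + I \otimes_k A$. -/

import Mathlib

open TensorProduct

/-- The image of `A ⊗[k] J` in `A ⊗[k] A`. -/
noncomputable def tensorIdealRight (k A : Type) [Field k] [CommRing A] [Algebra k A]
    (J : Ideal A) : Submodule k (A ⊗[k] A) :=
  LinearMap.range (TensorProduct.map (LinearMap.id : A →ₗ[k] A)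
    (J.restrictScalars k).subtype)

/-- The image of `J ⊗[k] A` in `A ⊗[k] A`. -/
noncomputable def tensorIdealLeft (k A : Type) [Field k] [CommRing A] [Algebra k A]
    (J : Ideal A) : Submodule k (A ⊗[k] A) :=
  LinearMap.range (TensorProduct.map (J.restrictScalars k).subtype
    (LinearMap.id : A →ₗ[k] A))

open LinearMap

section Coord
variable {k M A ι : Type*} [Field k] [AddCommGroup M] [Module k M]
  [AddCommGroup A] [Module k A] [DecidableEq ι]

/-- Coordinate equivalence `M ⊗ A ≃ (ι →₀ A)` from a basis of `M`. -/
noncomputable def coordEquiv (b : Module.Basis ι k M) : M ⊗[k] A ≃ₗ[k] (ι →₀ A) :=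
  (TensorProduct.congr b.repr (LinearEquiv.refl k A)).trans
    (TensorProduct.finsuppScalarLeft k A ι)

lemma coordEquiv_tmul (b : Module.Basis ι k M) (m : M) (a : A) (j : ι) :
    coordEquiv b (m ⊗ₜ[k] a) j = b.repr m j • a := by
  simp [coordEquiv, finsuppScalarLeft_apply_tmul_apply]

lemma coordEquiv_symm_single (b : Module.Basis ι k M) (j : ι) (a : A) :
    (coordEquiv b).symm (Finsupp.single j a) = b j ⊗ₜ[k] a := by
  simp [coordEquiv, finsuppScalarLeft_symm_apply_single]

lemma mem_range_lTensor_iff (b : Module.Basis ι k M) (N : Submodule k A) (y : M ⊗[k] A) :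
    y ∈ range (lTensor M N.subtype) ↔ ∀ j, coordEquiv b y j ∈ N := by
  constructor
  · rintro ⟨z, rfl⟩ j
    induction z using TensorProduct.induction_on with
    | zero => simp
    | tmul m n =>
      rw [lTensor_tmul, coordEquiv_tmul]
      exact N.smul_mem _ n.2
    | add u v hu hv =>
      rw [map_add, map_add, Finsupp.add_apply]
      exact N.add_mem hu hv
  · intro h
    have h2 : (coordEquiv b).symm ((coordEquiv b y).sum fun j a => Finsupp.single j a)
        = (coordEquiv b y).sum fun j a => (coordEquiv b).symm (Finsupp.single j a) :=
      map_finsuppSum _ _ _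
    have hy : y = (coordEquiv b y).sum fun j a => (coordEquiv b).symm (Finsupp.single j a) := by
      rw [← h2, Finsupp.sum_single, LinearEquiv.symm_apply_apply]
    rw [hy, Finsupp.sum]
    refine Submodule.sum_mem _ fun j _ => ?_
    rw [coordEquiv_symm_single]
    exact ⟨b j ⊗ₜ[k] ⟨coordEquiv b y j, h j⟩, rfl⟩

end Coord

/-- Let `{I i | i ∈ Λ}` be a nonempty family of ideals of a `k`-algebra `A`, with
intersection `I`.  If `x ∈ A ⊗ (I i) + I ⊗ A` for every `i`, then `x ∈ A ⊗ I + I ⊗ A`. -/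
theorem mem_tensor_inter_of_forall (k A : Type) [Field k] [CommRing A] [Algebra k A]
    (Λ : Type) [Nonempty Λ] (I : Λ → Ideal A) (x : A ⊗[k] A)
    (hx : ∀ i : Λ, x ∈ tensorIdealRight k A (I i) ⊔ tensorIdealLeft k A (⨅ j, I j)) :
    x ∈ tensorIdealRight k A (⨅ j, I j) ⊔ tensorIdealLeft k A (⨅ j, I j) := by
  classical
  set N : Submodule k A := (⨅ j, I j).restrictScalars k with hN
  set Q := A ⧸ N with hQ
  set F : A ⊗[k] A →ₗ[k] Q ⊗[k] A := rTensor A N.mkQ with hF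
  have hker : ker F = tensorIdealLeft k A (⨅ j, I j) := rTensor_mkQ A N
  -- map F (tensorIdealRight J) = range (lTensor Q J.subtype)
  have hmap : ∀ J : Ideal A, Submodule.map F (tensorIdealRight k A J) =
      range (lTensor Q (J.restrictScalars k).subtype) := by
    intro J
    have h1 : tensorIdealRight k A J = range (lTensor A (J.restrictScalars k).subtype) := rfl
    rw [h1, ← range_comp, rTensor_comp_lTensor, ← lTensor_comp_rTensor, range_comp,
      range_eq_top.mpr (rTensor_surjective _ (Submodule.mkQ_surjective N)), Submodule.map_top]
  -- F x lies in range (lTensor Q (I i).subtype) for each i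
  have hFx : ∀ i, F x ∈ range (lTensor Q ((I i).restrictScalars k).subtype) := by
    intro i
    have := Submodule.mem_map_of_mem (f := F) (hx i)
    rw [Submodule.map_sup, ← hker] at this
    rcases Submodule.mem_sup.mp this with ⟨y, hy, z, hz, hyz⟩
    rcases hz with ⟨w, hw, rfl⟩
    rw [← hyz, mem_ker.mp hw, add_zero, ← hmap]
    exact hy
  obtain b := Module.Basis.ofVectorSpace k Q
  have hcoord : ∀ j, coordEquiv b (F x) j ∈ N := by
    intro j
    have hmem : coordEquiv b (F x) j ∈ (⨅ j, I j).restrictScalars k := by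
      rw [Submodule.restrictScalars_mem, Submodule.mem_iInf]
      intro i
      exact (mem_range_lTensor_iff b _ _).mp (hFx i) j
    exact hmem
  have hFx' : F x ∈ Submodule.map F (tensorIdealRight k A (⨅ j, I j)) := by
    rw [hmap]
    exact (mem_range_lTensor_iff b _ _).mpr hcoord
  have := Submodule.mem_comap.mpr hFx'
  rwa [Submodule.comap_map_eq, hker] at this
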